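/- arXiv:1710.11286 — 2 statements merged into one kernel-verified Lean document; each statement's English description precedes it below -/
import Mathlib

section
/- Let e_t ∈ ℝ^m, 1 ≤ t ≤ T, be random vectors forming a second-order stationary mean-zero process with finite fourth moments, satisfying: (i) Σ_{u∈ℤ} (E[e_1ᵀ e_{1+u}]/m)² ≤ S < ∞, and (ii) sup_{t,s} (1/m) Σ_{i,j=1}^m |Cov(e_{t,i}e_{s,i}, e_{t,j}e_{s,j})| ≤ B. Let E be the T×m matrix with rows e_tᵀ. Then E[(‖E‖²/(Tm))²] ≤ S/T + B/m, where ‖E‖ is the spectral norm. -/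
open MeasureTheory Matrix
open scoped Matrix

/-- Spectral (operator) norm of a real matrix, induced by Euclidean norms. -/
noncomputable def specNorm {T m : ℕ} (A : Matrix (Fin T) (Fin m) ℝ) : ℝ :=
  ‖(Matrix.toEuclideanLin A).toContinuousLinearMap‖

/-- Covariance of two real random variables: Cov(X,Y) = E[XY] − E[X]E[Y]. -/
noncomputable def cov {Ω : Type*} [MeasurableSpace Ω] (μ : Measure Ω) (X Y : Ω → ℝ) : ℝ :=
  (∫ ω, X ω * Y ω ∂μ) - (∫ ω, X ω ∂μ) * (∫ ω, Y ω ∂μ)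

open scoped Matrix.Norms.L2Operator in
lemma specNorm_pow_four_le {T m : ℕ} (A : Matrix (Fin T) (Fin m) ℝ) :
    ((specNorm A) ^ 2) ^ 2 ≤ ∑ i : Fin m, ∑ j : Fin m, (∑ t : Fin T, A t i * A t j) ^ 2 := by
  classical
  set B : Matrix (Fin m) (Fin m) ℝ := Aᴴ * A with hB
  have hspec : specNorm A = ‖A‖ := rfl
  have h1 : (specNorm A) ^ 2 = ‖B‖ := by
    rw [hspec, sq, ← Matrix.l2_opNorm_conjTranspose_mul_self]
  have hBentry : ∀ i j, B i j = ∑ t : Fin T, A t i * A t j := by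
    intro i j
    simp [hB, Matrix.mul_apply, Matrix.conjTranspose_apply, mul_comm]
  set Sig : ℝ := ∑ i : Fin m, ∑ j : Fin m, (∑ t : Fin T, A t i * A t j) ^ 2 with hSig
  have hSnn : 0 ≤ Sig := Finset.sum_nonneg fun i _ => Finset.sum_nonneg fun j _ => sq_nonneg _
  have h2 : ‖B‖ ≤ Real.sqrt Sig := by
    have hdef : ‖B‖ = ‖(Matrix.toEuclideanLin B).toContinuousLinearMap‖ := rfl
    rw [hdef]
    refine ContinuousLinearMap.opNorm_le_bound _ (Real.sqrt_nonneg _) fun x => ?_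
    have hx : ‖(Matrix.toEuclideanLin B).toContinuousLinearMap x‖ ^ 2
        ≤ Sig * ‖x‖ ^ 2 := by
      have hnorm : ‖(Matrix.toEuclideanLin B).toContinuousLinearMap x‖ ^ 2
          = ∑ i : Fin m, (∑ j : Fin m, B i j * x j) ^ 2 := by
        rw [EuclideanSpace.norm_eq, Real.sq_sqrt (Finset.sum_nonneg fun i _ => sq_nonneg _)]
        simp [Matrix.toEuclideanLin_apply, Matrix.mulVec, dotProduct, sq_abs]
      have hxnorm : ‖x‖ ^ 2 = ∑ j : Fin m, x j ^ 2 := by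
        rw [EuclideanSpace.norm_eq, Real.sq_sqrt (Finset.sum_nonneg fun i _ => sq_nonneg _)]
        simp [sq_abs]
      rw [hnorm, hxnorm, hSig, Finset.sum_mul]
      refine Finset.sum_le_sum fun i _ => ?_
      calc (∑ j : Fin m, B i j * x j) ^ 2
          ≤ (∑ j : Fin m, B i j ^ 2) * ∑ j : Fin m, x j ^ 2 :=
            Finset.sum_mul_sq_le_sq_mul_sq _ _ _
        _ = (∑ j : Fin m, (∑ t : Fin T, A t i * A t j) ^ 2) * ∑ j : Fin m, x j ^ 2 := by
            simp_rw [hBentry]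
    have h := Real.sqrt_le_sqrt hx
    rwa [Real.sqrt_sq (norm_nonneg _), Real.sqrt_mul hSnn, Real.sqrt_sq (norm_nonneg _)] at h
  calc ((specNorm A) ^ 2) ^ 2 = ‖B‖ ^ 2 := by rw [h1]
    _ ≤ (Real.sqrt Sig) ^ 2 := pow_le_pow_left₀ (h1 ▸ sq_nonneg (specNorm A)) h2 2
    _ = Sig := Real.sq_sqrt hSnn

/-- Lemma 1 of the paper, expectation form: under second-order stationarity, mean zero,
the autocovariance summability bound S and the fourth-cumulant bound B, the matrix E with
rows e_tᵀ, t = 1,…,T, satisfies E[(‖E‖²/(Tm))²] ≤ S/T + B/m (spectral norm). -/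
theorem stmt7 {Ω : Type*} [MeasurableSpace Ω] (μ : Measure Ω) [IsProbabilityMeasure μ]
    {m : ℕ} (hm : 0 < m) (T : ℕ) (hT : 0 < T) (e : ℤ → Fin m → Ω → ℝ)
    (hmeas : ∀ t i, Measurable (e t i))
    (hint4 : ∀ t s : ℤ, ∀ i j : Fin m,
      Integrable (fun ω => e t i ω * e s i ω * (e t j ω * e s j ω)) μ)
    (hint2 : ∀ t s : ℤ, ∀ i : Fin m, Integrable (fun ω => e t i ω * e s i ω) μ)
    (hmean : ∀ t : ℤ, ∀ i : Fin m, (∫ ω, e t i ω ∂μ) = 0)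
    (hstat : ∀ t u : ℤ, (∫ ω, ∑ i : Fin m, e t i ω * e (t + u) i ω ∂μ) =
      ∫ ω, ∑ i : Fin m, e 1 i ω * e (1 + u) i ω ∂μ)
    (S B : ℝ)
    (hsum : Summable (fun u : ℤ =>
      ((∫ ω, ∑ i : Fin m, e 1 i ω * e (1 + u) i ω ∂μ) / m) ^ 2))
    (hS : (∑' u : ℤ, ((∫ ω, ∑ i : Fin m, e 1 i ω * e (1 + u) i ω ∂μ) / m) ^ 2) ≤ S)
    (hB : ∀ t s : ℤ, (1 / (m : ℝ)) * ∑ i : Fin m, ∑ j : Fin m,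
      |cov μ (fun ω => e t i ω * e s i ω) (fun ω => e t j ω * e s j ω)| ≤ B) :
    (∫ ω, ((specNorm (Matrix.of fun (t : Fin T) (j : Fin m) => e ((t : ℕ) + 1) j ω)) ^ 2 /
        ((T : ℝ) * m)) ^ 2 ∂μ) ≤ S / T + B / m := by
  classical
  have hmR : (0:ℝ) < m := by exact_mod_cast hm
  have hTR : (0:ℝ) < T := by exact_mod_cast hT
  set γ : ℤ → ℝ := fun u => ∫ ω, ∑ i : Fin m, e 1 i ω * e (1 + u) i ω ∂μ with hγdef
  -- key per-(t,s) bound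
  have hK : ∀ t s : ℤ,
      (∑ i : Fin m, ∑ j : Fin m, ∫ ω, e t i ω * e s i ω * (e t j ω * e s j ω) ∂μ)
        ≤ m * B + (γ (s - t)) ^ 2 := by
    intro t s
    have hγeq : γ (s - t) = ∑ i : Fin m, ∫ ω, e t i ω * e s i ω ∂μ := by
      have h1 := hstat t (s - t)
      rw [show t + (s - t) = s by ring] at h1
      rw [hγdef]
      simp only
      rw [← h1, integral_finset_sum _ (fun i _ => hint2 t s i)]
    have hcov : ∀ i j : Fin m, (∫ ω, e t i ω * e s i ω * (e t j ω * e s j ω) ∂μ)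
        = cov μ (fun ω => e t i ω * e s i ω) (fun ω => e t j ω * e s j ω)
          + (∫ ω, e t i ω * e s i ω ∂μ) * (∫ ω, e t j ω * e s j ω ∂μ) := by
      intro i j
      rw [cov]
      ring
    calc (∑ i : Fin m, ∑ j : Fin m, ∫ ω, e t i ω * e s i ω * (e t j ω * e s j ω) ∂μ)
        = (∑ i : Fin m, ∑ j : Fin m,
            cov μ (fun ω => e t i ω * e s i ω) (fun ω => e t j ω * e s j ω))
          + (∑ i : Fin m, ∫ ω, e t i ω * e s i ω ∂μ)
            * (∑ j : Fin m, ∫ ω, e t j ω * e s j ω ∂μ) := by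
          rw [Finset.sum_mul_sum, ← Finset.sum_add_distrib]
          refine Finset.sum_congr rfl fun i _ => ?_
          rw [← Finset.sum_add_distrib]
          exact Finset.sum_congr rfl fun j _ => hcov i j
      _ ≤ m * B + (γ (s - t)) ^ 2 := by
          refine add_le_add ?_ (le_of_eq (by rw [hγeq]; ring))
          calc (∑ i : Fin m, ∑ j : Fin m,
                cov μ (fun ω => e t i ω * e s i ω) (fun ω => e t j ω * e s j ω))
              ≤ ∑ i : Fin m, ∑ j : Fin m,
                |cov μ (fun ω => e t i ω * e s i ω) (fun ω => e t j ω * e s j ω)| :=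
                Finset.sum_le_sum fun i _ => Finset.sum_le_sum fun j _ => le_abs_self _
            _ = m * ((1 / (m:ℝ)) * ∑ i : Fin m, ∑ j : Fin m,
                |cov μ (fun ω => e t i ω * e s i ω) (fun ω => e t j ω * e s j ω)|) := by
                field_simp
            _ ≤ m * B := mul_le_mul_of_nonneg_left (hB t s) (le_of_lt hmR)
  -- row bound for the autocovariance part
  have hrow : ∀ t : Fin T,
      (∑ s : Fin T, (γ (((s:ℕ):ℤ) - ((t:ℕ):ℤ)) / m) ^ 2) ≤ S := by
    intro t
    have hinj : ∀ x ∈ (Finset.univ : Finset (Fin T)), ∀ y ∈ (Finset.univ : Finset (Fin T)),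
        ((x:ℕ):ℤ) - ((t:ℕ):ℤ) = ((y:ℕ):ℤ) - ((t:ℕ):ℤ) → x = y := by
      intro x _ y _ h
      have h2 : ((x:ℕ):ℤ) = ((y:ℕ):ℤ) := by linarith
      have h3 : (x:ℕ) = (y:ℕ) := by exact_mod_cast h2
      exact Fin.ext h3
    calc (∑ s : Fin T, (γ (((s:ℕ):ℤ) - ((t:ℕ):ℤ)) / m) ^ 2)
        = ∑ u ∈ Finset.univ.image (fun s : Fin T => ((s:ℕ):ℤ) - ((t:ℕ):ℤ)),
            (γ u / m) ^ 2 := by rw [Finset.sum_image hinj]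
      _ ≤ ∑' u : ℤ, (γ u / m) ^ 2 :=
          Summable.sum_le_tsum _ (fun _ _ => sq_nonneg _) hsum
      _ ≤ S := hS
  -- the dominating function
  set g : Ω → ℝ := fun ω =>
    (∑ i : Fin m, ∑ j : Fin m,
      (∑ t : Fin T, e (((t:ℕ):ℤ) + 1) i ω * e (((t:ℕ):ℤ) + 1) j ω) ^ 2) / ((T:ℝ) * m) ^ 2
    with hg
  have hc2 : (0:ℝ) < ((T:ℝ) * m) ^ 2 := by positivity
  -- pointwise bound
  have hpt : ∀ ω, ((specNorm (Matrix.of fun (t : Fin T) (j : Fin m) =>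
      e ((t : ℕ) + 1) j ω)) ^ 2 / ((T : ℝ) * m)) ^ 2 ≤ g ω := by
    intro ω
    rw [hg, div_pow]
    exact (div_le_div_iff_of_pos_right hc2).mpr
      (by simpa using specNorm_pow_four_le (Matrix.of fun (t : Fin T) (j : Fin m) =>
        e ((t : ℕ) + 1) j ω))
  -- rewriting each square as a double sum
  have hsq_eq : ∀ i j : Fin m,
      (fun ω => (∑ t : Fin T, e (((t:ℕ):ℤ) + 1) i ω * e (((t:ℕ):ℤ) + 1) j ω) ^ 2)
      = fun ω => ∑ t : Fin T, ∑ s : Fin T,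
          e (((t:ℕ):ℤ) + 1) i ω * e (((s:ℕ):ℤ) + 1) i ω
            * (e (((t:ℕ):ℤ) + 1) j ω * e (((s:ℕ):ℤ) + 1) j ω) := by
    intro i j
    funext ω
    rw [sq, Finset.sum_mul_sum]
    exact Finset.sum_congr rfl fun t _ => Finset.sum_congr rfl fun s _ => by ring
  have hint_sq : ∀ i j : Fin m,
      Integrable (fun ω => (∑ t : Fin T,
        e (((t:ℕ):ℤ) + 1) i ω * e (((t:ℕ):ℤ) + 1) j ω) ^ 2) μ := by
    intro i j
    rw [hsq_eq i j]
    exact integrable_finset_sum _ fun t _ => integrable_finset_sum _ fun s _ => hint4 _ _ i j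
  have hint_g : Integrable g μ := by
    rw [hg]
    exact (integrable_finset_sum _ fun i _ =>
      integrable_finset_sum _ fun j _ => hint_sq i j).div_const _
  -- first inequality
  have hmono : (∫ ω, ((specNorm (Matrix.of fun (t : Fin T) (j : Fin m) =>
      e ((t : ℕ) + 1) j ω)) ^ 2 / ((T : ℝ) * m)) ^ 2 ∂μ) ≤ ∫ ω, g ω ∂μ :=
    integral_mono_of_nonneg (Filter.Eventually.of_forall fun ω => sq_nonneg _) hint_g
      (Filter.Eventually.of_forall hpt)
  -- compute the integral of g
  have h1 : ∫ ω, g ω ∂μ = (∑ i : Fin m, ∑ j : Fin m, ∑ t : Fin T, ∑ s : Fin T,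
      ∫ ω, e (((t:ℕ):ℤ) + 1) i ω * e (((s:ℕ):ℤ) + 1) i ω
        * (e (((t:ℕ):ℤ) + 1) j ω * e (((s:ℕ):ℤ) + 1) j ω) ∂μ) / ((T:ℝ) * m) ^ 2 := by
    simp only [hg]
    rw [integral_div]
    congr 1
    rw [integral_finset_sum _ (fun i _ => integrable_finset_sum _ fun j _ => hint_sq i j)]
    refine Finset.sum_congr rfl fun i _ => ?_
    rw [integral_finset_sum _ (fun j _ => hint_sq i j)]
    refine Finset.sum_congr rfl fun j _ => ?_
    rw [hsq_eq i j,
      integral_finset_sum _ (fun t _ => integrable_finset_sum _ fun s _ => hint4 _ _ i j)]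
    refine Finset.sum_congr rfl fun t _ => ?_
    rw [integral_finset_sum _ (fun s _ => hint4 _ _ i j)]
  -- swap the sums
  have hswap : (∑ i : Fin m, ∑ j : Fin m, ∑ t : Fin T, ∑ s : Fin T,
      ∫ ω, e (((t:ℕ):ℤ) + 1) i ω * e (((s:ℕ):ℤ) + 1) i ω
        * (e (((t:ℕ):ℤ) + 1) j ω * e (((s:ℕ):ℤ) + 1) j ω) ∂μ)
      = ∑ t : Fin T, ∑ s : Fin T, ∑ i : Fin m, ∑ j : Fin m,
      ∫ ω, e (((t:ℕ):ℤ) + 1) i ω * e (((s:ℕ):ℤ) + 1) i ω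
        * (e (((t:ℕ):ℤ) + 1) j ω * e (((s:ℕ):ℤ) + 1) j ω) ∂μ := by
    calc (∑ i : Fin m, ∑ j : Fin m, ∑ t : Fin T, ∑ s : Fin T,
        ∫ ω, e (((t:ℕ):ℤ) + 1) i ω * e (((s:ℕ):ℤ) + 1) i ω
          * (e (((t:ℕ):ℤ) + 1) j ω * e (((s:ℕ):ℤ) + 1) j ω) ∂μ)
        = ∑ i : Fin m, ∑ t : Fin T, ∑ j : Fin m, ∑ s : Fin T,
          ∫ ω, e (((t:ℕ):ℤ) + 1) i ω * e (((s:ℕ):ℤ) + 1) i ω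
            * (e (((t:ℕ):ℤ) + 1) j ω * e (((s:ℕ):ℤ) + 1) j ω) ∂μ :=
          Finset.sum_congr rfl fun i _ => Finset.sum_comm
      _ = ∑ t : Fin T, ∑ i : Fin m, ∑ j : Fin m, ∑ s : Fin T,
          ∫ ω, e (((t:ℕ):ℤ) + 1) i ω * e (((s:ℕ):ℤ) + 1) i ω
            * (e (((t:ℕ):ℤ) + 1) j ω * e (((s:ℕ):ℤ) + 1) j ω) ∂μ := Finset.sum_comm
      _ = ∑ t : Fin T, ∑ i : Fin m, ∑ s : Fin T, ∑ j : Fin m,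
          ∫ ω, e (((t:ℕ):ℤ) + 1) i ω * e (((s:ℕ):ℤ) + 1) i ω
            * (e (((t:ℕ):ℤ) + 1) j ω * e (((s:ℕ):ℤ) + 1) j ω) ∂μ :=
          Finset.sum_congr rfl fun t _ => Finset.sum_congr rfl fun i _ => Finset.sum_comm
      _ = ∑ t : Fin T, ∑ s : Fin T, ∑ i : Fin m, ∑ j : Fin m,
          ∫ ω, e (((t:ℕ):ℤ) + 1) i ω * e (((s:ℕ):ℤ) + 1) i ω
            * (e (((t:ℕ):ℤ) + 1) j ω * e (((s:ℕ):ℤ) + 1) j ω) ∂μ :=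
          Finset.sum_congr rfl fun t _ => Finset.sum_comm
  -- bound the big sum
  have h2 : (∑ t : Fin T, ∑ s : Fin T, ∑ i : Fin m, ∑ j : Fin m,
      ∫ ω, e (((t:ℕ):ℤ) + 1) i ω * e (((s:ℕ):ℤ) + 1) i ω
        * (e (((t:ℕ):ℤ) + 1) j ω * e (((s:ℕ):ℤ) + 1) j ω) ∂μ)
      ≤ (T:ℝ) * T * (m * B) + (m:ℝ) ^ 2 * ((T:ℝ) * S) := by
    calc (∑ t : Fin T, ∑ s : Fin T, ∑ i : Fin m, ∑ j : Fin m,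
        ∫ ω, e (((t:ℕ):ℤ) + 1) i ω * e (((s:ℕ):ℤ) + 1) i ω
          * (e (((t:ℕ):ℤ) + 1) j ω * e (((s:ℕ):ℤ) + 1) j ω) ∂μ)
        ≤ ∑ t : Fin T, ∑ s : Fin T,
            ((m:ℝ) * B + (γ (((s:ℕ):ℤ) - ((t:ℕ):ℤ))) ^ 2) := by
          refine Finset.sum_le_sum fun t _ => Finset.sum_le_sum fun s _ => ?_
          have h := hK ((((t:ℕ):ℤ)) + 1) ((((s:ℕ):ℤ)) + 1)
          rwa [show ((((s:ℕ):ℤ)) + 1) - ((((t:ℕ):ℤ)) + 1) = ((s:ℕ):ℤ) - ((t:ℕ):ℤ) by ring]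
            at h
      _ = (T:ℝ) * T * (m * B)
          + ∑ t : Fin T, ∑ s : Fin T, (γ (((s:ℕ):ℤ) - ((t:ℕ):ℤ))) ^ 2 := by
          simp only [Finset.sum_add_distrib, Finset.sum_const, Finset.card_univ,
            Fintype.card_fin, nsmul_eq_mul]
          ring
      _ ≤ (T:ℝ) * T * (m * B) + (m:ℝ) ^ 2 * ((T:ℝ) * S) := by
          refine add_le_add (le_refl _) ?_
          have heq : (∑ t : Fin T, ∑ s : Fin T, (γ (((s:ℕ):ℤ) - ((t:ℕ):ℤ))) ^ 2)
              = (m:ℝ) ^ 2 * ∑ t : Fin T, ∑ s : Fin T,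
                  (γ (((s:ℕ):ℤ) - ((t:ℕ):ℤ)) / m) ^ 2 := by
            rw [Finset.mul_sum]
            refine Finset.sum_congr rfl fun t _ => ?_
            rw [Finset.mul_sum]
            refine Finset.sum_congr rfl fun s _ => ?_
            rw [div_pow]
            field_simp
          rw [heq]
          have hsum_le : (∑ t : Fin T, ∑ s : Fin T,
              (γ (((s:ℕ):ℤ) - ((t:ℕ):ℤ)) / m) ^ 2) ≤ (T:ℝ) * S := by
            calc (∑ t : Fin T, ∑ s : Fin T, (γ (((s:ℕ):ℤ) - ((t:ℕ):ℤ)) / m) ^ 2)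
                ≤ ∑ _t : Fin T, S := Finset.sum_le_sum fun t _ => hrow t
              _ = (T:ℝ) * S := by
                  simp [Finset.sum_const, Finset.card_univ, Fintype.card_fin]
          exact mul_le_mul_of_nonneg_left hsum_le (by positivity)
  calc (∫ ω, ((specNorm (Matrix.of fun (t : Fin T) (j : Fin m) =>
      e ((t : ℕ) + 1) j ω)) ^ 2 / ((T : ℝ) * m)) ^ 2 ∂μ)
      ≤ ∫ ω, g ω ∂μ := hmono
    _ = (∑ t : Fin T, ∑ s : Fin T, ∑ i : Fin m, ∑ j : Fin m,
        ∫ ω, e (((t:ℕ):ℤ) + 1) i ω * e (((s:ℕ):ℤ) + 1) i ω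
          * (e (((t:ℕ):ℤ) + 1) j ω * e (((s:ℕ):ℤ) + 1) j ω) ∂μ) / ((T:ℝ) * m) ^ 2 := by
        rw [h1, hswap]
    _ ≤ ((T:ℝ) * T * (m * B) + (m:ℝ) ^ 2 * ((T:ℝ) * S)) / ((T:ℝ) * m) ^ 2 :=
        (div_le_div_iff_of_pos_right hc2).mpr h2
    _ = S / T + B / m := by
        field_simp
        ring
end

section
/- Deterministic core of the consistency theorem: Let Z = χ + E be T×m real matrices with rank(χ) ≤ r, ‖χ‖ ≤ C√(Tm), and let Ẑ satisfy ‖Z − Ẑ‖_F ≤ ‖E‖_F, rank(Ẑ) ≤ r, ‖Ẑ‖ ≤ C√(Tm) (spectral norms). Then (1/(Tm)) ‖χ − Ẑ‖_F² ≤ 4 r C ‖E‖ / √(Tm). -/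
open Matrix
open scoped Matrix
open scoped RealInnerProductSpace

/-- Squared Frobenius norm ‖A‖_F² = trace(Aᵀ A). -/
noncomputable def frobSq {T m : ℕ} (A : Matrix (Fin T) (Fin m) ℝ) : ℝ :=
  Matrix.trace (Aᵀ * A)

lemma frobSq_eq {T m : ℕ} (A : Matrix (Fin T) (Fin m) ℝ) :
    frobSq A = ∑ j, ∑ i, A i j ^ 2 := by
  simp [frobSq, Matrix.trace, Matrix.mul_apply, Matrix.diag, sq]

lemma traceTB {T m : ℕ} (A B : Matrix (Fin T) (Fin m) ℝ) :
    Matrix.trace (Aᵀ * B) = ∑ j, ∑ i, A i j * B i j := by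
  simp [Matrix.trace, Matrix.mul_apply, Matrix.diag]

lemma frobSq_nonneg {T m : ℕ} (A : Matrix (Fin T) (Fin m) ℝ) : 0 ≤ frobSq A := by
  rw [frobSq_eq]; positivity

lemma specNorm_nonneg {T m : ℕ} (A : Matrix (Fin T) (Fin m) ℝ) : 0 ≤ specNorm A :=
  norm_nonneg _

lemma mulVec_sq_le {T m : ℕ} (A : Matrix (Fin T) (Fin m) ℝ) (x : Fin m → ℝ) :
    ∑ i, (A.mulVec x i) ^ 2 ≤ specNorm A ^ 2 * ∑ j, (x j) ^ 2 := by
  have h := ((Matrix.toEuclideanLin A).toContinuousLinearMap).le_opNorm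
    ((WithLp.equiv 2 (Fin m → ℝ)).symm x)
  have hx : ‖(WithLp.equiv 2 (Fin m → ℝ)).symm x‖ = Real.sqrt (∑ j, (x j)^2) := by
    rw [EuclideanSpace.norm_eq]; simp [sq]
  have hy : ‖(Matrix.toEuclideanLin A).toContinuousLinearMap
      ((WithLp.equiv 2 (Fin m → ℝ)).symm x)‖ = Real.sqrt (∑ i, (A.mulVec x i)^2) := by
    rw [show ((Matrix.toEuclideanLin A).toContinuousLinearMap
      ((WithLp.equiv 2 (Fin m → ℝ)).symm x)) = (WithLp.equiv 2 (Fin T → ℝ)).symm (A.mulVec x) by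
        simp [Matrix.toEuclideanLin_apply_piLp_toLp]]
    rw [EuclideanSpace.norm_eq]; simp [sq]
  rw [hx, hy] at h
  calc ∑ i, (A.mulVec x i)^2 = (Real.sqrt (∑ i, (A.mulVec x i)^2))^2 := by
        rw [Real.sq_sqrt (by positivity)]
    _ ≤ (specNorm A * Real.sqrt (∑ j, (x j)^2))^2 := by
        apply pow_le_pow_left₀ (Real.sqrt_nonneg _) h
    _ = specNorm A ^2 * ∑ j, (x j)^2 := by
        rw [mul_pow, Real.sq_sqrt (by positivity)]

lemma frobSq_mul_le {T m : ℕ} (A : Matrix (Fin T) (Fin m) ℝ) (B : Matrix (Fin m) (Fin m) ℝ) :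
    frobSq (A * B) ≤ specNorm A ^ 2 * frobSq B := by
  rw [frobSq_eq, frobSq_eq, Finset.mul_sum]
  apply Finset.sum_le_sum
  intro j _
  have h := mulVec_sq_le A (fun k => B k j)
  simpa [Matrix.mulVec, Matrix.mul_apply, dotProduct] using h

lemma exists_proj {T m : ℕ} (L : Matrix (Fin T) (Fin m) ℝ) :
    ∃ P : Matrix (Fin m) (Fin m) ℝ, Pᵀ = P ∧ L * P = L ∧ P * P = P ∧
      Matrix.trace P ≤ (L.rank : ℝ) := by
  classical
  set U : Submodule ℝ (EuclideanSpace ℝ (Fin m)) :=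
    Submodule.span ℝ (Set.range (fun i => (WithLp.equiv 2 (Fin m → ℝ)).symm (L i))) with hU
  set k := Module.finrank ℝ U with hk
  let b : OrthonormalBasis (Fin k) ℝ U := stdOrthonormalBasis ℝ U
  let v : Fin k → (Fin m → ℝ) := fun s => WithLp.equiv 2 (Fin m → ℝ) ((b s : EuclideanSpace ℝ (Fin m)))
  have horth : ∀ s t, ∑ a, v s a * v t a = if s = t then (1:ℝ) else 0 := by
    intro s t
    have h := b.orthonormal
    rw [orthonormal_iff_ite] at h
    have h2 := h s t
    rw [Submodule.coe_inner, PiLp.inner_apply] at h2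
    simp [RCLike.inner_apply, v] at h2
    rw [← h2]
    exact Finset.sum_congr rfl (fun _ _ => mul_comm _ _)
  have hexp : ∀ i : Fin T, ∀ a : Fin m, L i a = ∑ s, (∑ c, v s c * L i c) * v s a := by
    intro i a
    have hmem : (WithLp.equiv 2 (Fin m → ℝ)).symm (L i) ∈ U :=
      Submodule.subset_span ⟨i, rfl⟩
    set x : U := ⟨(WithLp.equiv 2 (Fin m → ℝ)).symm (L i), hmem⟩ with hx
    have h := b.sum_repr' x
    have hco : ∀ s, (⟪b s, x⟫ : ℝ) = ∑ c, v s c * L i c := by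
      intro s
      rw [Submodule.coe_inner, PiLp.inner_apply]
      simp [RCLike.inner_apply, v, hx]
      exact Finset.sum_congr rfl (fun _ _ => mul_comm _ _)
    have h2 := congrArg (fun w : U => (w : EuclideanSpace ℝ (Fin m)) a) h
    simp only [Submodule.coe_sum, Submodule.coe_smul, Finset.sum_apply, Pi.smul_apply,
      smul_eq_mul] at h2
    have h2' : L i a = (∑ s, ((⟪b s, x⟫:ℝ)) • ((b s : EuclideanSpace ℝ (Fin m)))) a := h2.symm
    have h3 : (∑ s, ((⟪b s, x⟫:ℝ)) • ((b s : EuclideanSpace ℝ (Fin m)))) a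
        = ∑ s, (⟪b s, x⟫:ℝ) * v s a := by simp [v]
    rw [h2', h3]
    simp_rw [hco]
  refine ⟨Matrix.of (fun a c => ∑ s, v s a * v s c), ?_, ?_, ?_, ?_⟩
  · ext a c
    simp only [Matrix.transpose_apply, Matrix.of_apply]
    congr 1; ext s; ring
  · ext i j
    rw [Matrix.mul_apply]
    simp only [Matrix.of_apply]
    have hc : ∀ c, L i c * ∑ s, v s c * v s j = ∑ s, (v s c * L i c) * v s j := by
      intro c; rw [Finset.mul_sum]; congr 1; ext s; ring
    simp_rw [hc]
    rw [Finset.sum_comm]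
    simp_rw [← Finset.sum_mul]
    exact (hexp i j).symm
  · ext a c
    rw [Matrix.mul_apply]
    simp only [Matrix.of_apply]
    calc ∑ x, (∑ s, v s a * v s x) * (∑ t, v t x * v t c)
        = ∑ x, ∑ s, ∑ t, (v s a * v t c) * (v s x * v t x) := by
          congr 1; ext x; rw [Finset.sum_mul]; congr 1; ext s; rw [Finset.mul_sum]
          congr 1; ext t; ring
      _ = ∑ s, ∑ t, (v s a * v t c) * ∑ x, v s x * v t x := by
          rw [Finset.sum_comm]; congr 1; ext s; rw [Finset.sum_comm]
          congr 1; ext t; rw [← Finset.mul_sum]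
      _ = ∑ s, v s a * v s c := by
          simp only [horth]
          simp
  · have htr : Matrix.trace (Matrix.of (fun a c => ∑ s, v s a * v s c)) = (k : ℝ) := by
      rw [Matrix.trace]
      simp only [Matrix.diag_apply, Matrix.of_apply]
      rw [Finset.sum_comm]
      have h1 : ∀ s, ∑ a, v s a * v s a = 1 := by intro s; simpa using horth s s
      simp [h1]
    rw [htr]
    have hrank : L.rank = Module.finrank ℝ (Submodule.span ℝ (Set.range L)) := by
      rw [← Matrix.rank_transpose L, Matrix.rank_eq_finrank_span_cols]; rfl
    have hmap : U = Submodule.map ((WithLp.linearEquiv 2 ℝ (Fin m → ℝ)).symm :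
        (Fin m → ℝ) →ₗ[ℝ] EuclideanSpace ℝ (Fin m)) (Submodule.span ℝ (Set.range L)) := by
      rw [Submodule.map_span]
      congr 1
      rw [hU]
      apply congrArg
      ext y
      constructor
      · rintro ⟨i, rfl⟩
        exact ⟨L i, ⟨i, rfl⟩, rfl⟩
      · rintro ⟨x, ⟨i, rfl⟩, rfl⟩
        exact ⟨i, rfl⟩
    have hkr : k = Module.finrank ℝ (Submodule.span ℝ (Set.range L)) := by
      rw [hk, hmap, LinearEquiv.finrank_map_eq]
    rw [hkr, ← hrank]

/-- Key rank trace bound: |⟨E, L⟩_F| ≤ rank(L) ‖E‖ ‖L‖. -/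
lemma key_bound {T m : ℕ} (E L : Matrix (Fin T) (Fin m) ℝ) :
    |Matrix.trace (Eᵀ * L)| ≤ (L.rank : ℝ) * specNorm E * specNorm L := by
  obtain ⟨P, hPt, hLP, hPP, htrP⟩ := exists_proj L
  -- trace identity
  have hmat : (L * P) * (P * Eᵀ) = L * Eᵀ := by
    rw [Matrix.mul_assoc L P (P * Eᵀ), ← Matrix.mul_assoc P P Eᵀ, hPP,
      ← Matrix.mul_assoc, hLP]
  have hid : Matrix.trace (Eᵀ * L) = Matrix.trace ((E * P)ᵀ * (L * P)) := by
    rw [Matrix.transpose_mul, hPt]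
    calc Matrix.trace (Eᵀ * L) = Matrix.trace (L * Eᵀ) := Matrix.trace_mul_comm _ _
      _ = Matrix.trace ((L * P) * (P * Eᵀ)) := by rw [hmat]
      _ = Matrix.trace ((P * Eᵀ) * (L * P)) := Matrix.trace_mul_comm _ _
  have htrP' : 0 ≤ Matrix.trace P := by
    have : Matrix.trace P = frobSq P := by rw [frobSq, hPt, hPP]
    rw [this]; exact frobSq_nonneg P
  -- Cauchy-Schwarz
  have hsum : Matrix.trace ((E * P)ᵀ * (L * P)) =
      ∑ x : Fin m × Fin T, (E * P) x.2 x.1 * (L * P) x.2 x.1 := by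
    rw [traceTB, Fintype.sum_prod_type]
  have hf2 : ∑ x : Fin m × Fin T, ((E * P) x.2 x.1)^2 = frobSq (E * P) := by
    rw [frobSq_eq, Fintype.sum_prod_type]
  have hg2 : ∑ x : Fin m × Fin T, ((L * P) x.2 x.1)^2 = frobSq (L * P) := by
    rw [frobSq_eq, Fintype.sum_prod_type]
  have hCS : |Matrix.trace ((E * P)ᵀ * (L * P))| ≤
      Real.sqrt (frobSq (E * P)) * Real.sqrt (frobSq (L * P)) := by
    rw [hsum]
    have h := Finset.sum_mul_sq_le_sq_mul_sq Finset.univ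
      (fun x : Fin m × Fin T => (E * P) x.2 x.1) (fun x => (L * P) x.2 x.1)
    rw [hf2, hg2] at h
    calc |∑ x : Fin m × Fin T, (E * P) x.2 x.1 * (L * P) x.2 x.1|
        = Real.sqrt ((∑ x : Fin m × Fin T, (E * P) x.2 x.1 * (L * P) x.2 x.1)^2) :=
          (Real.sqrt_sq_eq_abs _).symm
      _ ≤ Real.sqrt (frobSq (E * P) * frobSq (L * P)) := Real.sqrt_le_sqrt h
      _ = _ := Real.sqrt_mul (frobSq_nonneg _) _
  -- bound the two Frobenius factors
  have hE : Real.sqrt (frobSq (E * P)) ≤ specNorm E * Real.sqrt (Matrix.trace P) := by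
    have h1 : frobSq (E * P) ≤ specNorm E ^ 2 * Matrix.trace P := by
      have := frobSq_mul_le E P
      rwa [show frobSq P = Matrix.trace P by rw [frobSq, hPt, hPP]] at this
    calc Real.sqrt (frobSq (E * P)) ≤ Real.sqrt (specNorm E ^ 2 * Matrix.trace P) :=
          Real.sqrt_le_sqrt h1
      _ = specNorm E * Real.sqrt (Matrix.trace P) := by
          rw [Real.sqrt_mul (sq_nonneg (specNorm E)) (Matrix.trace P), Real.sqrt_sq (specNorm_nonneg E)]
  have hL : Real.sqrt (frobSq (L * P)) ≤ specNorm L * Real.sqrt (Matrix.trace P) := by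
    have h1 : frobSq (L * P) ≤ specNorm L ^ 2 * Matrix.trace P := by
      have := frobSq_mul_le L P
      rwa [show frobSq P = Matrix.trace P by rw [frobSq, hPt, hPP]] at this
    calc Real.sqrt (frobSq (L * P)) ≤ Real.sqrt (specNorm L ^ 2 * Matrix.trace P) :=
          Real.sqrt_le_sqrt h1
      _ = specNorm L * Real.sqrt (Matrix.trace P) := by
          rw [Real.sqrt_mul (sq_nonneg (specNorm L)) (Matrix.trace P), Real.sqrt_sq (specNorm_nonneg L)]
  calc |Matrix.trace (Eᵀ * L)| = |Matrix.trace ((E * P)ᵀ * (L * P))| := by rw [hid]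
    _ ≤ Real.sqrt (frobSq (E * P)) * Real.sqrt (frobSq (L * P)) := hCS
    _ ≤ (specNorm E * Real.sqrt (Matrix.trace P)) * (specNorm L * Real.sqrt (Matrix.trace P)) :=
        mul_le_mul hE hL (Real.sqrt_nonneg _)
          (mul_nonneg (specNorm_nonneg E) (Real.sqrt_nonneg _))
    _ = specNorm E * specNorm L * (Real.sqrt (Matrix.trace P) * Real.sqrt (Matrix.trace P)) := by
        ring
    _ = specNorm E * specNorm L * Matrix.trace P := by
        rw [Real.mul_self_sqrt htrP']
    _ ≤ specNorm E * specNorm L * (L.rank : ℝ) :=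
        mul_le_mul_of_nonneg_left htrP (mul_nonneg (specNorm_nonneg E) (specNorm_nonneg L))
    _ = (L.rank : ℝ) * specNorm E * specNorm L := by ring


/-- Deterministic core of the consistency theorem: if Z = χ + E, rank(χ) ≤ r,
‖χ‖ ≤ C√(Tm), and Ẑ satisfies ‖Z − Ẑ‖_F ≤ ‖E‖_F, rank(Ẑ) ≤ r, ‖Ẑ‖ ≤ C√(Tm),
then (1/(Tm)) ‖χ − Ẑ‖_F² ≤ 4rC‖E‖/√(Tm). -/
theorem stmt15 {T m : ℕ} (hT : 0 < T) (hm : 0 < m) (r : ℕ) (C : ℝ)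
    (Z χ E Zhat : Matrix (Fin T) (Fin m) ℝ) (hZ : Z = χ + E)
    (hχrank : χ.rank ≤ r) (hχnorm : specNorm χ ≤ C * Real.sqrt ((T : ℝ) * m))
    (hopt : Real.sqrt (frobSq (Z - Zhat)) ≤ Real.sqrt (frobSq E))
    (hZhatrank : Zhat.rank ≤ r) (hZhatnorm : specNorm Zhat ≤ C * Real.sqrt ((T : ℝ) * m)) :
    (1 / ((T : ℝ) * m)) * frobSq (χ - Zhat) ≤
      4 * r * C * specNorm E / Real.sqrt ((T : ℝ) * m) := by
  set s := Real.sqrt ((T : ℝ) * m) with hs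
  have hTm : (0:ℝ) < (T : ℝ) * m := by positivity
  have hspos : 0 < s := Real.sqrt_pos.mpr hTm
  -- step 1: frobSq (Z - Zhat) ≤ frobSq E
  have hopt2 : frobSq (Z - Zhat) ≤ frobSq E := by
    calc frobSq (Z - Zhat) = (Real.sqrt (frobSq (Z - Zhat)))^2 := by
          rw [Real.sq_sqrt (frobSq_nonneg _)]
      _ ≤ (Real.sqrt (frobSq E))^2 := pow_le_pow_left₀ (Real.sqrt_nonneg _) hopt 2
      _ = frobSq E := Real.sq_sqrt (frobSq_nonneg _)
  -- step 2: expansion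
  have hexp : frobSq (Z - Zhat) =
      frobSq (χ - Zhat) + 2 * Matrix.trace ((χ - Zhat)ᵀ * E) + frobSq E := by
    rw [frobSq_eq, frobSq_eq, frobSq_eq, traceTB]
    have hptw : ∀ i j, (Z - Zhat) i j = (χ - Zhat) i j + E i j := by
      intro i j; simp [hZ]; ring
    simp_rw [hptw, add_sq]
    rw [Finset.mul_sum, ← Finset.sum_add_distrib, ← Finset.sum_add_distrib]
    congr 1; ext j
    rw [Finset.mul_sum, ← Finset.sum_add_distrib, ← Finset.sum_add_distrib]
    congr 1; ext i
    ring
  -- step 3: frobSq (χ - Zhat) ≤ 2 * (trace(Eᵀ Zhat) - trace(Eᵀ χ))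
  have hsplit : Matrix.trace ((χ - Zhat)ᵀ * E) =
      Matrix.trace (Eᵀ * χ) - Matrix.trace (Eᵀ * Zhat) := by
    rw [traceTB, traceTB, traceTB, ← Finset.sum_sub_distrib]
    congr 1; ext j
    rw [← Finset.sum_sub_distrib]
    congr 1; ext i
    simp [Matrix.sub_apply]; ring
  have hbound1 := key_bound E Zhat
  have hbound2 := key_bound E χ
  have hEnn := specNorm_nonneg E
  have hCsnn : 0 ≤ C * s := le_trans (specNorm_nonneg Zhat) hZhatnorm
  have hZb : Matrix.trace (Eᵀ * Zhat) ≤ (r : ℝ) * specNorm E * (C * s) := by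
    calc Matrix.trace (Eᵀ * Zhat) ≤ |Matrix.trace (Eᵀ * Zhat)| := le_abs_self _
      _ ≤ (Zhat.rank : ℝ) * specNorm E * specNorm Zhat := hbound1
      _ ≤ (r : ℝ) * specNorm E * (C * s) := by
          apply mul_le_mul _ hZhatnorm (specNorm_nonneg _) (by positivity)
          apply mul_le_mul_of_nonneg_right _ hEnn
          exact_mod_cast hZhatrank
  have hχb : -Matrix.trace (Eᵀ * χ) ≤ (r : ℝ) * specNorm E * (C * s) := by
    calc -Matrix.trace (Eᵀ * χ) ≤ |Matrix.trace (Eᵀ * χ)| := neg_le_abs _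
      _ ≤ (χ.rank : ℝ) * specNorm E * specNorm χ := hbound2
      _ ≤ (r : ℝ) * specNorm E * (C * s) := by
          apply mul_le_mul _ hχnorm (specNorm_nonneg _) (by positivity)
          apply mul_le_mul_of_nonneg_right _ hEnn
          exact_mod_cast hχrank
  have hmain : frobSq (χ - Zhat) ≤ 4 * (r : ℝ) * C * specNorm E * s := by
    have h1 : frobSq (χ - Zhat) + 2 * Matrix.trace ((χ - Zhat)ᵀ * E) ≤ 0 := by
      nlinarith [hopt2, hexp]
    rw [hsplit] at h1
    nlinarith [hZb, hχb]
  -- final algebra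
  have hs2 : s * s = (T : ℝ) * m := Real.mul_self_sqrt (le_of_lt hTm)
  rw [← hs2]
  calc (1/(s*s)) * frobSq (χ - Zhat) ≤ (1/(s*s)) * (4 * (r : ℝ) * C * specNorm E * s) :=
        mul_le_mul_of_nonneg_left hmain (by positivity)
    _ = 4 * (r:ℝ) * C * specNorm E / s := by
        field_simp
end
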